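/- For a probability distribution (p₁,...,pₙ) and density matrices ρ₁,...,ρₙ on a finite-dimensional Hilbert space, ∑ᵢ pᵢ·S(ρᵢ) ≤ S(∑ᵢ pᵢρᵢ), where S(ρ) = -Tr(ρ·log₂ρ) is the von Neumann entropy (concavity of von Neumann entropy). -/

import Mathlib

open scoped ComplexOrder
open Matrix

/-- Von Neumann entropy (in bits) of a Hermitian matrix, via its eigenvalues. -/
noncomputable def vnEntropy {d : ℕ} {ρ : Matrix (Fin d) (Fin d) ℂ} (h : ρ.IsHermitian) : ℝ :=
  (∑ i, Real.negMulLog (h.eigenvalues i)) / Real.log 2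

private lemma sum_mulVec_aux {n d : ℕ} (M : Fin n → Matrix (Fin d) (Fin d) ℂ)
    (v : Fin d → ℂ) : (∑ i, M i) *ᵥ v = ∑ i, (M i) *ᵥ v := by
  ext k
  simp only [Matrix.mulVec, dotProduct, Matrix.sum_apply, Finset.sum_apply,
    Finset.sum_mul]
  exact Finset.sum_comm

private lemma dotProduct_sum_aux {n d : ℕ} (v : Fin d → ℂ) (w : Fin n → Fin d → ℂ) :
    dotProduct v (∑ i, w i) = ∑ i, dotProduct v (w i) := by
  simp only [dotProduct, Finset.sum_apply, Finset.mul_sum]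
  exact Finset.sum_comm

private lemma parseval_aux {d : ℕ} (b : OrthonormalBasis (Fin d) ℂ (EuclideanSpace ℂ (Fin d)))
    (x : EuclideanSpace ℂ (Fin d)) :
    ∑ j, ‖(inner ℂ (b j) x : ℂ)‖ ^ 2 = ‖x‖ ^ 2 := by
  calc ∑ j, ‖(inner ℂ (b j) x : ℂ)‖ ^ 2 = ∑ j, ‖b.repr x j‖ ^ 2 := by
        refine Finset.sum_congr rfl fun j _ => ?_
        rw [b.repr_apply_apply]
    _ = ‖b.repr x‖ ^ 2 := (PiLp.norm_sq_eq_of_L2 _ _).symm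
    _ = ‖x‖ ^ 2 := by rw [b.repr.norm_map]

private lemma quad_eq_aux {d : ℕ} {A : Matrix (Fin d) (Fin d) ℂ} (hA : A.IsHermitian)
    (x : EuclideanSpace ℂ (Fin d)) :
    dotProduct (star ⇑x) (A *ᵥ ⇑x)
      = ((∑ j, hA.eigenvalues j * ‖(inner ℂ (hA.eigenvectorBasis j) x : ℂ)‖ ^ 2 : ℝ) : ℂ) := by
  set f := hA.eigenvectorBasis with hf
  set y : EuclideanSpace ℂ (Fin d) := (WithLp.equiv 2 _).symm (A *ᵥ ⇑x) with hy
  have key : ∀ j, (inner ℂ (f j) y : ℂ) = (hA.eigenvalues j : ℂ) * (inner ℂ (f j) x : ℂ) := by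
    intro j
    have h1 : (inner ℂ (f j) y : ℂ) = dotProduct (star ⇑(f j)) (A *ᵥ ⇑x) :=
      (EuclideanSpace.inner_eq_star_dotProduct _ _).trans (dotProduct_comm _ _)
    have h3 := congrArg star (hA.mulVec_eigenvectorBasis j)
    rw [Matrix.star_mulVec, hA.eq] at h3
    have h2 : star ⇑(f j) ᵥ* A = (hA.eigenvalues j : ℂ) • star ⇑(f j) := by
      rw [h3]
      ext l
      simp [Complex.real_smul]
      exact Or.inl rfl
    rw [h1, dotProduct_mulVec, h2, smul_dotProduct]
    rw [smul_eq_mul, EuclideanSpace.inner_eq_star_dotProduct, dotProduct_comm]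
  have hxy : dotProduct (star ⇑x) (A *ᵥ ⇑x) = (inner ℂ x y : ℂ) :=
    ((EuclideanSpace.inner_eq_star_dotProduct _ _).trans (dotProduct_comm _ _)).symm
  rw [hxy, ← f.sum_inner_mul_inner x y]
  push_cast
  refine Finset.sum_congr rfl fun j _ => ?_
  rw [key j, ← inner_conj_symm x (f j)]
  have hz : (starRingEnd ℂ) (inner ℂ (f j) x : ℂ) * (inner ℂ (f j) x : ℂ)
      = (‖(inner ℂ (f j) x : ℂ)‖ : ℂ) ^ 2 := by
    rw [mul_comm, Complex.mul_conj, Complex.normSq_eq_norm_sq]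
    push_cast
    ring
  linear_combination ((hA.eigenvalues j : ℝ) : ℂ) * hz

theorem vnEntropy_concave {n d : ℕ} (p : Fin n → ℝ) (ρ : Fin n → Matrix (Fin d) (Fin d) ℂ)
    (hp : ∀ i, 0 ≤ p i) (hp1 : ∑ i, p i = 1)
    (hρ : ∀ i, (ρ i).PosSemidef) (htr : ∀ i, (ρ i).trace = 1)
    (hmix : (∑ i, (p i : ℂ) • ρ i).IsHermitian) :
    ∑ i, p i * vnEntropy (hρ i).isHermitian ≤ vnEntropy hmix := by
  classical
  have hlog2 : (0:ℝ) < Real.log 2 := Real.log_pos one_lt_two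
  set e := hmix.eigenvectorBasis with he
  set f : (i : Fin n) → OrthonormalBasis (Fin d) ℂ (EuclideanSpace ℂ (Fin d)) :=
    fun i => (hρ i).isHermitian.eigenvectorBasis with hfdef
  set μ : Fin n → Fin d → ℝ := fun i => (hρ i).isHermitian.eigenvalues with hμdef
  -- the k-th eigenvalue of the mixture as a convex combination of the μ i j
  have key : ∀ k, hmix.eigenvalues k
      = ∑ i, p i * ∑ j, μ i j * ‖(inner ℂ (f i j) (e k) : ℂ)‖ ^ 2 := by
    intro k
    rw [hmix.eigenvalues_eq k]
    have hd : dotProduct (star ⇑(e k)) ((∑ i, (p i : ℂ) • ρ i) *ᵥ ⇑(e k))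
        = ((∑ i, p i * ∑ j, μ i j * ‖(inner ℂ (f i j) (e k) : ℂ)‖ ^ 2 : ℝ) : ℂ) := by
      rw [sum_mulVec_aux, dotProduct_sum_aux]
      push_cast
      refine Finset.sum_congr rfl fun i _ => ?_
      rw [Matrix.smul_mulVec, dotProduct_smul, quad_eq_aux (hρ i).isHermitian]
      push_cast
      simp [smul_eq_mul, Finset.mul_sum]
      rfl
    rw [hd]
    norm_cast
  -- Parseval in both directions
  have pars1 : ∀ k, ∀ i, ∑ j, ‖(inner ℂ (f i j) (e k) : ℂ)‖ ^ 2 = 1 := by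
    intro k i
    rw [parseval_aux (f i) (e k)]
    rw [(e.orthonormal).1 k]
    norm_num
  have pars2 : ∀ i j, ∑ k, ‖(inner ℂ (f i j) (e k) : ℂ)‖ ^ 2 = 1 := by
    intro i j
    have hsym : ∀ k, ‖(inner ℂ (f i j) (e k) : ℂ)‖ = ‖(inner ℂ (e k) (f i j) : ℂ)‖ :=
      fun k => norm_inner_symm _ _
    simp_rw [hsym]
    rw [parseval_aux e (f i j), ((f i).orthonormal).1 j]
    norm_num
  -- Jensen for each k
  have jensen : ∀ k, ∑ i, p i * ∑ j, ‖(inner ℂ (f i j) (e k) : ℂ)‖ ^ 2 * Real.negMulLog (μ i j)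
      ≤ Real.negMulLog (hmix.eigenvalues k) := by
    intro k
    have H := Real.concaveOn_negMulLog.le_map_sum
      (t := (Finset.univ : Finset (Fin n × Fin d)))
      (w := fun ij => p ij.1 * ‖(inner ℂ (f ij.1 ij.2) (e k) : ℂ)‖ ^ 2)
      (p := fun ij => μ ij.1 ij.2)
      (fun ij _ => mul_nonneg (hp ij.1) (sq_nonneg _))
      (by
        rw [Fintype.sum_prod_type]
        simp_rw [← Finset.mul_sum]
        simp_rw [pars1]
        simpa using hp1)
      (fun ij _ => (hρ ij.1).eigenvalues_nonneg ij.2)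
    have hsum : ∑ ij : Fin n × Fin d,
        (p ij.1 * ‖(inner ℂ (f ij.1 ij.2) (e k) : ℂ)‖ ^ 2) • μ ij.1 ij.2
        = hmix.eigenvalues k := by
      rw [key k, Fintype.sum_prod_type]
      refine Finset.sum_congr rfl fun i _ => ?_
      rw [Finset.mul_sum]
      refine Finset.sum_congr rfl fun j _ => ?_
      simp only [smul_eq_mul]; ring
    rw [hsum] at H
    refine le_trans (le_of_eq ?_) H
    rw [Fintype.sum_prod_type]
    refine Finset.sum_congr rfl fun i _ => ?_
    rw [Finset.mul_sum]
    refine Finset.sum_congr rfl fun j _ => ?_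
    simp only [smul_eq_mul]; ring
  -- assemble
  have main : ∑ i, p i * ∑ j, Real.negMulLog (μ i j)
      ≤ ∑ k, Real.negMulLog (hmix.eigenvalues k) := by
    have lhs_eq : ∑ i, p i * ∑ j, Real.negMulLog (μ i j)
        = ∑ k, ∑ i, p i * ∑ j, ‖(inner ℂ (f i j) (e k) : ℂ)‖ ^ 2 * Real.negMulLog (μ i j) := by
      calc ∑ i, p i * ∑ j, Real.negMulLog (μ i j)
          = ∑ i, ∑ j, ∑ k, p i * (‖(inner ℂ (f i j) (e k) : ℂ)‖ ^ 2 * Real.negMulLog (μ i j)) := by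
            refine Finset.sum_congr rfl fun i _ => ?_
            rw [Finset.mul_sum]
            refine Finset.sum_congr rfl fun j _ => ?_
            rw [eq_comm, ← Finset.mul_sum, ← Finset.sum_mul, pars2 i j, one_mul]
        _ = ∑ k, ∑ i, ∑ j, p i * (‖(inner ℂ (f i j) (e k) : ℂ)‖ ^ 2 * Real.negMulLog (μ i j)) :=
            (Finset.sum_congr rfl fun i _ => Finset.sum_comm).trans Finset.sum_comm
        _ = ∑ k, ∑ i, p i * ∑ j, ‖(inner ℂ (f i j) (e k) : ℂ)‖ ^ 2 * Real.negMulLog (μ i j) := by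
            refine Finset.sum_congr rfl fun k _ => Finset.sum_congr rfl fun i _ => ?_
            rw [Finset.mul_sum]
    rw [lhs_eq]
    exact Finset.sum_le_sum fun k _ => jensen k
  have goal_eq : ∑ i, p i * vnEntropy (hρ i).isHermitian
      = (∑ i, p i * ∑ j, Real.negMulLog (μ i j)) / Real.log 2 := by
    rw [Finset.sum_div]
    refine Finset.sum_congr rfl fun i _ => ?_
    rw [vnEntropy, mul_div_assoc]
  have goal_eq2 : vnEntropy hmix
      = (∑ k, Real.negMulLog (hmix.eigenvalues k)) / Real.log 2 := rfl
  rw [goal_eq, goal_eq2]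
  gcongr
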